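/- Let $X$ be a Hausdorff topological space and $L$ a vector sublattice of $C(X)$. For $f \in C(X)$ let $O_f = \{x : f(x) \neq 0\}$ and $O_L = \bigcup_{f \in L} O_f$. If the open set $O_L$ is connected, then the only projection bands in $L$ are $\{0\}$ and $L$. -/
import Mathlib


/-- if `L` is a vector sublattice of `C(X)` for a Hausdorff space `X`
and the open set `O_L = ⋃_{f ∈ L} {x : f x ≠ 0}` is connected, then the only
projection bands in `L` are `{0}` and `L`. -/
theorem stmt_15 {X : Type*} [TopologicalSpace X] [T2Space X]
    (L : Set C(X, ℝ))
    (hL0 : (0 : C(X, ℝ)) ∈ L)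
    (hLadd : ∀ f ∈ L, ∀ g ∈ L, f + g ∈ L)
    (hLsmul : ∀ (c : ℝ), ∀ f ∈ L, c • f ∈ L)
    (hLsup : ∀ f ∈ L, ∀ g ∈ L, f ⊔ g ∈ L)
    (hLinf : ∀ f ∈ L, ∀ g ∈ L, f ⊓ g ∈ L)
    (hconn : IsConnected {x : X | ∃ f ∈ L, f x ≠ 0})
    -- `B` is a projection band in `L`:
    (B : Set C(X, ℝ)) (hBL : B ⊆ L) (hB0 : (0 : C(X, ℝ)) ∈ B)
    (hBadd : ∀ f ∈ B, ∀ g ∈ B, f + g ∈ B)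
    (hBsmul : ∀ (c : ℝ), ∀ f ∈ B, c • f ∈ B)
    (hBsolid : ∀ f ∈ B, ∀ g ∈ L, |g| ≤ |f| → g ∈ B)
    (hBproj : ∀ f ∈ L, ∃ g ∈ B, ∃ h ∈ L, (∀ b ∈ B, |b| ⊓ |h| = 0) ∧ f = g + h) :
    B = {0} ∨ B = L := by
  set s : Set X := {x : X | ∃ f ∈ L, f x ≠ 0} with hs
  set U : Set X := {x : X | ∃ g ∈ B, g x ≠ 0} with hU
  set V : Set X := {x : X | ∃ h ∈ L, (∀ b ∈ B, |b| ⊓ |h| = 0) ∧ h x ≠ 0} with hV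
  -- disjointness of U and V
  have hdisj : ∀ x, x ∈ U → x ∈ V → False := by
    intro x ⟨g, hgB, hgx⟩ ⟨h, hhL, hhd, hhx⟩
    have h0 : (|g| ⊓ |h|) x = 0 := by rw [hhd g hgB]; rfl
    have : min (|g x|) (|h x|) = 0 := h0
    rcases min_cases (|g x|) (|h x|) with ⟨he, _⟩ | ⟨he, _⟩
    · exact hgx (abs_eq_zero.mp (he ▸ this))
    · exact hhx (abs_eq_zero.mp (he ▸ this))
  have hUopen : IsOpen U := by
    have : U = ⋃ g ∈ B, {x : X | g x ≠ 0} := by ext x; simp [hU]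
    rw [this]
    exact isOpen_biUnion fun g _ => isOpen_ne.preimage g.continuous
  have hVopen : IsOpen V := by
    have : V = ⋃ h ∈ {h | h ∈ L ∧ ∀ b ∈ B, |b| ⊓ |h| = 0}, {x : X | h x ≠ 0} := by
      ext x; simp [hV]; tauto
    rw [this]
    exact isOpen_biUnion fun h _ => isOpen_ne.preimage h.continuous
  have hsub : s ⊆ U ∪ V := by
    rintro x ⟨f, hfL, hfx⟩
    obtain ⟨g, hgB, h, hhL, hhd, hfgh⟩ := hBproj f hfL
    by_cases hgx : g x = 0
    · right
      refine ⟨h, hhL, hhd, ?_⟩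
      intro hhx
      apply hfx
      rw [hfgh]; simp [hgx, hhx]
    · exact Or.inl ⟨g, hgB, hgx⟩
  have key := hconn.isPreconnected U V hUopen hVopen hsub
  have hnot : ¬ ((s ∩ U).Nonempty ∧ (s ∩ V).Nonempty) := by
    rintro ⟨h1, h2⟩
    obtain ⟨x, _, hxU, hxV⟩ := key h1 h2
    exact hdisj x hxU hxV
  by_cases hUn : (s ∩ U).Nonempty
  · -- V ∩ s empty, so B = L
    right
    have hVe : ¬ (s ∩ V).Nonempty := fun h2 => hnot ⟨hUn, h2⟩
    refine Set.Subset.antisymm hBL (fun f hfL => ?_)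
    obtain ⟨g, hgB, h, hhL, hhd, hfgh⟩ := hBproj f hfL
    have hh0 : h = 0 := by
      by_contra hne
      obtain ⟨x, hx⟩ : ∃ x, h x ≠ 0 := by
        by_contra hall
        push_neg at hall
        exact hne (ContinuousMap.ext hall)
      exact hVe ⟨x, ⟨h, hhL, hx⟩, ⟨h, hhL, hhd, hx⟩⟩
    rw [hfgh, hh0, add_zero]; exact hgB
  · -- U ∩ s empty, so B = {0}
    left
    refine Set.Subset.antisymm (fun g hgB => ?_) (by rintro x rfl; exact hB0)
    have : g = 0 := by
      by_contra hne
      obtain ⟨x, hx⟩ : ∃ x, g x ≠ 0 := by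
        by_contra hall
        push_neg at hall
        exact hne (ContinuousMap.ext hall)
      exact hUn ⟨x, ⟨g, hBL hgB, hx⟩, ⟨g, hgB, hx⟩⟩
    exact this
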